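/- arXiv:1608.05550 — 6 statements merged into one kernel-verified Lean document; each statement's English description precedes it below -/
import Mathlib

section
/- No MUPS of a string S can contain another distinct MUPS: for any two distinct intervals [i1,j1], [i2,j2] that are both MUPSs of S, it is not the case that i1 ≤ i2 ≤ j2 ≤ j1. -/
/-- `sub S i j` is the substring `S[i..j]`, 1-indexed and inclusive. -/
def sub (S : List Char) (i j : ℕ) : List Char := (S.drop (i-1)).take (j+1-i)

/-- A string is a palindrome if it equals its reversal. -/
def isPal (w : List Char) : Prop := w.reverse = w

/-- The set of (1-indexed) occurrence positions of `w` in `S`. -/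
def occs (S w : List Char) : Finset ℕ :=
  (Finset.Icc 1 S.length).filter (fun p => sub S p (p + w.length - 1) = w)

/-- `w` occurs exactly once in `S`. -/
def uniqueIn (S w : List Char) : Prop := (occs S w).card = 1

/-- `[i,j]` is (the interval of) a unique palindromic substring of `S`. -/
def UPS (S : List Char) (i j : ℕ) : Prop :=
  1 ≤ i ∧ i ≤ j ∧ j ≤ S.length ∧ isPal (sub S i j) ∧ uniqueIn S (sub S i j)

/-- `[i,j]` is a minimal unique palindromic substring of `S`. -/
def MUPS (S : List Char) (i j : ℕ) : Prop :=
  UPS S i j ∧ (j + 1 - i ≤ 2 ∨ 2 ≤ (occs S (sub S (i+1) (j-1))).card)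

/-- `[i,j]` is a shortest unique palindromic substring of `S` for the query `[s,t]`. -/
def SUPS (S : List Char) (s t i j : ℕ) : Prop :=
  UPS S i j ∧ i ≤ s ∧ s ≤ t ∧ t ≤ j ∧
    ∀ i' j', UPS S i' j' → i' ≤ s → t ≤ j' → j - i ≤ j' - i'

def occursAt (S w : List Char) (p : ℕ) : Prop :=
  ∃ pre post : List Char, S = pre ++ w ++ post ∧ pre.length + 1 = p

lemma length_sub {S : List Char} {i j : ℕ} (hi : 1 ≤ i) (hj : j ≤ S.length) :
    (sub S i j).length = j + 1 - i := by
  simp [sub]; omega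

lemma mem_occs_iff {S w : List Char} (hw : w ≠ []) {p : ℕ} :
    p ∈ occs S w ↔ occursAt S w p := by
  have hL : 1 ≤ w.length := List.length_pos_iff.mpr hw
  constructor
  · intro h
    rw [occs, Finset.mem_filter, Finset.mem_Icc] at h
    obtain ⟨⟨hp1, hp2⟩, hsub⟩ := h
    have harith : p + w.length - 1 + 1 - p = w.length := by omega
    rw [sub, harith] at hsub
    refine ⟨S.take (p-1), S.drop (p-1+w.length), ?_, ?_⟩
    · conv_lhs => rw [← List.take_append_drop (p-1) S]
      rw [← List.take_append_drop w.length (S.drop (p-1)), hsub,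
        List.drop_drop]
      simp [List.append_assoc, Nat.add_comm]
    · rw [List.length_take]; omega
  · rintro ⟨pre, post, hS, hp⟩
    rw [occs, Finset.mem_filter, Finset.mem_Icc]
    have hlen : S.length = pre.length + w.length + post.length := by
      simp [hS]; omega
    refine ⟨⟨by omega, by omega⟩, ?_⟩
    have harith : p + w.length - 1 + 1 - p = w.length := by omega
    have hp1 : p - 1 = pre.length := by omega
    rw [sub, harith, hp1, hS, List.append_assoc, List.drop_left, List.take_left]

lemma sub_occursAt {S : List Char} {i j : ℕ} (hi : 1 ≤ i) (hij : i ≤ j)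
    (hj : j ≤ S.length) : occursAt S (sub S i j) i := by
  refine ⟨S.take (i-1), S.drop j, ?_, by rw [List.length_take]; omega⟩
  conv_lhs => rw [← List.take_append_drop (i-1) S]
  rw [← List.take_append_drop (j+1-i) (S.drop (i-1)), List.drop_drop]
  have e : i-1+(j+1-i) = j := by omega
  rw [e, sub, List.append_assoc]

lemma sub_split {S : List Char} {i i' j' j : ℕ} (hi : 1 ≤ i) (h1 : i ≤ i')
    (h2 : i' ≤ j') (h3 : j' ≤ j) (hj : j ≤ S.length) :
    ∃ A B : List Char, sub S i j = A ++ sub S i' j' ++ B ∧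
      A.length = i' - i ∧ B.length = j - j' := by
  refine ⟨(S.drop (i-1)).take (i'-i), (S.drop j').take (j-j'), ?_, ?_, ?_⟩
  · have e1 : j+1-i = (i'-i) + ((j'+1-i') + (j-j')) := by omega
    rw [sub, sub, e1, List.take_add, List.take_add, List.drop_drop, List.drop_drop]
    have e2 : i-1 + (i'-i) = i'-1 := by omega
    have e3 : i'-1 + (j'+1-i') = j' := by omega
    rw [e2, e3, List.append_assoc]
  · rw [List.length_take, List.length_drop]; omega
  · rw [List.length_take, List.length_drop]; omega

lemma occursAt_sub {S v A u B : List Char} {p : ℕ} (h : occursAt S v p)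
    (hv : v = A ++ u ++ B) : occursAt S u (p + A.length) := by
  obtain ⟨pre, post, hS, hp⟩ := h
  exact ⟨pre ++ A, B ++ post, by simp [hS, hv], by simp; omega⟩

theorem stmt3 (S : List Char) (i1 j1 i2 j2 : ℕ)
    (h1 : MUPS S i1 j1) (h2 : MUPS S i2 j2) (hne : (i1, j1) ≠ (i2, j2)) :
    ¬ (i1 ≤ i2 ∧ j2 ≤ j1) := by
  rintro ⟨hi, hj⟩
  obtain ⟨⟨hi1, hij1, hj1, hpal1, huniq1⟩, hmin1⟩ := h1
  obtain ⟨⟨hi2, hij2, hj2, hpal2, huniq2⟩, hmin2⟩ := h2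
  have hwlen : (sub S i2 j2).length = j2+1-i2 := length_sub hi2 hj2
  have hwne : sub S i2 j2 ≠ [] := by
    intro h; rw [h] at hwlen; simp at hwlen; omega
  obtain ⟨A, B, hW, hA, hB⟩ := sub_split hi1 hi hij2 hj hj1
  have hW' : sub S i1 j1 = B.reverse ++ sub S i2 j2 ++ A.reverse := by
    conv_lhs => rw [← hpal1]
    rw [hW]
    simp only [List.reverse_append, List.append_assoc]
    rw [hpal2]
  have hoccW : occursAt S (sub S i1 j1) i1 := sub_occursAt hi1 hij1 hj1
  have occ_a := occursAt_sub hoccW hW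
  have occ_b := occursAt_sub hoccW hW'
  rw [hA] at occ_a
  rw [List.length_reverse, hB] at occ_b
  by_cases hd : i2 - i1 = j1 - j2
  · -- centered case
    have hd0 : i2 - i1 ≠ 0 := by
      intro h0
      exact hne (by simp only [Prod.mk.injEq]; omega)
    have hm : 2 ≤ (occs S (sub S (i1+1) (j1-1))).card := by
      rcases hmin1 with h | h
      · omega
      · exact h
    have hIlen : (sub S (i1+1) (j1-1)).length = j1-1+1-(i1+1) :=
      length_sub (by omega) (by omega)
    have hIne : sub S (i1+1) (j1-1) ≠ [] := by
      intro h; rw [h] at hIlen; simp at hIlen; omega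
    obtain ⟨A', B', hI, hA', hB'⟩ :=
      sub_split (S := S) (i := i1+1) (i' := i2) (j' := j2) (j := j1-1)
        (by omega) (by omega) hij2 (by omega) (by omega)
    obtain ⟨p, hp, q, hq, hpq⟩ := Finset.one_lt_card.mp hm
    have op := occursAt_sub ((mem_occs_iff hIne).mp hp) hI
    have oq := occursAt_sub ((mem_occs_iff hIne).mp hq) hI
    rw [hA'] at op oq
    have := Finset.card_le_one.mp (le_of_eq huniq2) _
      ((mem_occs_iff hwne).mpr op) _ ((mem_occs_iff hwne).mpr oq)
    omega
  · have := Finset.card_le_one.mp (le_of_eq huniq2) _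
      ((mem_occs_iff hwne).mpr occ_a) _ ((mem_occs_iff hwne).mpr occ_b)
    omega
end

section
/- No two distinct MUPSs of a string S begin at the same position, and no two distinct MUPSs end at the same position; consequently, a string of length n has at most n MUPSs. -/
lemma len_sub (S : List Char) {i j : ℕ} (h1 : 1 ≤ i) (hn : j ≤ S.length) :
    (sub S i j).length = j + 1 - i := by
  simp only [sub, List.length_take, List.length_drop]
  omega

/-- suffix of a palindrome is the reverse of the corresponding prefix -/
lemma pal_mirror {w : List Char} (hw : isPal w) (d : ℕ) (hd : d ≤ w.length) :
    w.drop d = (w.take (w.length - d)).reverse := by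
  rw [List.reverse_take, hw]
  congr 1
  omega

lemma sub_take (S : List Char) {i j k : ℕ} (hk : i ≤ k) (hkj : k ≤ j) :
    sub S i k = (sub S i j).take (k + 1 - i) := by
  simp only [sub, List.take_take]
  congr 1
  omega

lemma sub_drop (S : List Char) {i j k : ℕ} (h1 : 1 ≤ i) (hk : i ≤ k) (hkj : k ≤ j) :
    sub S k j = (sub S i j).drop (k - i) := by
  unfold sub
  rw [List.drop_take, List.drop_drop,
    show i - 1 + (k - i) = k - 1 from by omega,
    show j + 1 - i - (k - i) = j + 1 - k from by omega]

/-- If a palindrome `sub S i j1` sits as a prefix of a palindrome `sub S i j2`,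
it also occurs ending at `j2`. -/
lemma mirror_occ (S : List Char) {i j1 j2 : ℕ} (h1 : 1 ≤ i) (hij : i ≤ j1)
    (hjj : j1 ≤ j2) (hn : j2 ≤ S.length)
    (hp2 : isPal (sub S i j2)) (hp1 : isPal (sub S i j1)) :
    sub S (i + (j2 - j1)) j2 = sub S i j1 := by
  have hw : (sub S i j2).length = j2 + 1 - i := len_sub S h1 hn
  have e1 : sub S (i + (j2 - j1)) j2 = (sub S i j2).drop (j2 - j1) := by
    have := sub_drop S (i := i) (k := i + (j2 - j1)) (j := j2) h1 (by omega) (by omega)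
    rwa [show i + (j2 - j1) - i = j2 - j1 by omega] at this
  have h := pal_mirror hp2 (j2 - j1) (by omega)
  rw [hw, show j2 + 1 - i - (j2 - j1) = j1 + 1 - i by omega,
    ← sub_take S hij hjj] at h
  rw [e1, h]
  exact hp1

/-- Dual: palindrome suffix also occurs starting at `i1`. -/
lemma mirror_occ' (S : List Char) {i1 i2 j : ℕ} (h1 : 1 ≤ i1) (hii : i1 ≤ i2)
    (hij : i2 ≤ j) (hn : j ≤ S.length)
    (hp2 : isPal (sub S i1 j)) (hp1 : isPal (sub S i2 j)) :
    sub S i1 (j - (i2 - i1)) = sub S i2 j := by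
  have hw : (sub S i1 j).length = j + 1 - i1 := len_sub S h1 hn
  have e1 : sub S i2 j = (sub S i1 j).drop (i2 - i1) := sub_drop S h1 hii hij
  have h := pal_mirror hp2 (i2 - i1) (by omega)
  rw [hw, show j + 1 - i1 - (i2 - i1) = j - (i2 - i1) + 1 - i1 by omega,
    ← sub_take S (by omega) (by omega)] at h
  rw [← hp1, e1, h, List.reverse_reverse]

lemma mem_occs (S w : List Char) (p : ℕ) :
    p ∈ occs S w ↔ (1 ≤ p ∧ p ≤ S.length ∧ sub S p (p + w.length - 1) = w) := by
  simp [occs, and_assoc]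

theorem stmt4 (S : List Char) :
    (∀ i1 j1 i2 j2, MUPS S i1 j1 → MUPS S i2 j2 → (i1, j1) ≠ (i2, j2) →
      i1 ≠ i2 ∧ j1 ≠ j2) ∧
    {p : ℕ × ℕ | MUPS S p.1 p.2}.ncard ≤ S.length := by
  -- first: no two distinct UPS with same start can both be palindromic & unique... 
  have start : ∀ i j1 j2, UPS S i j1 → UPS S i j2 → j1 < j2 → False := by
    intro i j1 j2 ⟨h1, hij1, hn1, hp1, hu1⟩ ⟨_, hij2, hn2, hp2, hu2⟩ hjj
    have hocc := mirror_occ S h1 hij1 hjj.le hn2 hp2 hp1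
    have hlen : (sub S i j1).length = j1 + 1 - i := len_sub S h1 (by omega)
    have hm1 : i ∈ occs S (sub S i j1) := by
      rw [mem_occs]
      refine ⟨h1, by omega, ?_⟩
      rw [hlen, show i + (j1 + 1 - i) - 1 = j1 by omega]
    have hm2 : i + (j2 - j1) ∈ occs S (sub S i j1) := by
      rw [mem_occs]
      refine ⟨by omega, by omega, ?_⟩
      rw [hlen, show i + (j2 - j1) + (j1 + 1 - i) - 1 = j2 by omega]
      exact hocc
    have hc : 1 < (occs S (sub S i j1)).card :=
      Finset.one_lt_card.mpr ⟨i, hm1, i + (j2 - j1), hm2, by omega⟩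
    have hu1' : (occs S (sub S i j1)).card = 1 := hu1
    omega
  have endc : ∀ i1 i2 j, UPS S i1 j → UPS S i2 j → i1 < i2 → False := by
    intro i1 i2 j ⟨h1, hij1, hn1, hp1, hu1⟩ ⟨h2, hij2, hn2, hp2, hu2⟩ hii
    have hocc := mirror_occ' S h1 hii.le hij2 hn2 hp1 hp2
    have hlen : (sub S i2 j).length = j + 1 - i2 := len_sub S h2 hn2
    have hm1 : i2 ∈ occs S (sub S i2 j) := by
      rw [mem_occs]
      refine ⟨h2, by omega, ?_⟩
      rw [hlen, show i2 + (j + 1 - i2) - 1 = j by omega]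
    have hm2 : i1 ∈ occs S (sub S i2 j) := by
      rw [mem_occs]
      refine ⟨h1, by omega, ?_⟩
      rw [hlen, show i1 + (j + 1 - i2) - 1 = j - (i2 - i1) by omega]
      exact hocc
    have hc : 1 < (occs S (sub S i2 j)).card :=
      Finset.one_lt_card.mpr ⟨i2, hm1, i1, hm2, by omega⟩
    have hu2' : (occs S (sub S i2 j)).card = 1 := hu2
    omega
  have part1 : ∀ i1 j1 i2 j2, MUPS S i1 j1 → MUPS S i2 j2 → (i1, j1) ≠ (i2, j2) →
      i1 ≠ i2 ∧ j1 ≠ j2 := by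
    intro i1 j1 i2 j2 ⟨hu1, _⟩ ⟨hu2, _⟩ hne
    constructor
    · rintro rfl
      have hj : j1 ≠ j2 := fun h => hne (by rw [h])
      rcases hj.lt_or_gt with h | h
      · exact absurd (start i1 j1 j2 hu1 hu2 h) id
      · exact absurd (start i1 j2 j1 hu2 hu1 h) id
    · rintro rfl
      have hi : i1 ≠ i2 := fun h => hne (by rw [h])
      rcases hi.lt_or_gt with h | h
      · exact absurd (endc i1 i2 j1 hu1 hu2 h) id
      · exact absurd (endc i2 i1 j1 hu2 hu1 h) id
  refine ⟨part1, ?_⟩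
  have hmap : ∀ p ∈ {p : ℕ × ℕ | MUPS S p.1 p.2}, p.1 ∈ (Set.Icc 1 S.length) := by
    rintro ⟨i, j⟩ ⟨⟨h1, hij, hn, _, _⟩, _⟩
    exact ⟨h1, by omega⟩
  have hinj : Set.InjOn Prod.fst {p : ℕ × ℕ | MUPS S p.1 p.2} := by
    rintro ⟨i1, j1⟩ h1 ⟨i2, j2⟩ h2 (h : i1 = i2)
    by_contra hne
    exact (part1 i1 j1 i2 j2 h1 h2 (by simpa using hne)).1 h
  calc {p : ℕ × ℕ | MUPS S p.1 p.2}.ncard ≤ (Set.Icc 1 S.length).ncard :=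
        Set.ncard_le_ncard_of_injOn Prod.fst hmap hinj (Set.finite_Icc _ _)
    _ = S.length := by
        rw [← Finset.coe_Icc, Set.ncard_coe_finset, Nat.card_Icc]
        omega
end

section
/- Every unique palindromic substring S[i..j] of S contains a MUPS of S with the same center: there exists k ≥ 0 such that [i+k, j-k] is a MUPS of S. -/
lemma pal_inner (w : List Char) (hw : w.reverse = w) :
    ((w.drop 1).take (w.length - 2)).reverse = (w.drop 1).take (w.length - 2) := by
  rcases Nat.eq_zero_or_pos (w.length - 2) with h0 | h2
  · simp [h0]
  · rw [List.reverse_take, List.reverse_drop, hw, List.length_drop]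
    have h1 : w.length - 1 - (w.length - 2) = 1 := by omega
    rw [h1, List.drop_take]
    congr 1

lemma sub_length (S : List Char) (i j : ℕ) (hi : 1 ≤ i) (hj : j ≤ S.length) :
    (sub S i j).length = j + 1 - i := by
  unfold sub
  rw [List.length_take, List.length_drop]
  omega

lemma sub_inner (S : List Char) (i j : ℕ) (hi : 1 ≤ i) (hij : i ≤ j) (hj : j ≤ S.length) :
    sub S (i+1) (j-1) = ((sub S i j).drop 1).take ((sub S i j).length - 2) := by
  unfold sub
  rw [List.length_take, List.length_drop, List.drop_take, List.drop_drop, List.take_take]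
  have h1 : i - 1 + 1 = i := by omega
  have h2 : j - 1 + 1 - (i+1) = j - i - 1 := by omega
  have h3 : ((j + 1 - i) ⊓ (S.length - (i-1)) - 2) ⊓ (j + 1 - i - 1) = j - i - 1 := by omega
  have h4 : i + 1 - 1 = i := by omega
  rw [h1, h2, h3, h4]

lemma stmt5_aux (S : List Char) : ∀ n i j, j - i ≤ n → UPS S i j →
    ∃ k, 2 * k ≤ j - i ∧ MUPS S (i + k) (j - k) := by
  intro n
  induction n with
  | zero =>
    intro i j hn h
    refine ⟨0, by omega, ?_⟩
    simp only [Nat.add_zero, Nat.sub_zero]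
    exact ⟨h, Or.inl (by omega)⟩
  | succ n ih =>
    intro i j hn h
    by_cases hM : j + 1 - i ≤ 2 ∨ 2 ≤ (occs S (sub S (i+1) (j-1))).card
    · refine ⟨0, by omega, ?_⟩
      simp only [Nat.add_zero, Nat.sub_zero]
      exact ⟨h, hM⟩
    push_neg at hM
    obtain ⟨h1, h2⟩ := hM
    obtain ⟨hi1, hij, hjl, hpal, huni⟩ := h
    have hij2 : i + 2 ≤ j := by omega
    have hpal' : isPal (sub S (i+1) (j-1)) := by
      rw [isPal, sub_inner S i j hi1 hij hjl]
      exact pal_inner _ hpal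
    have hlen : (sub S (i+1) (j-1)).length = j - 1 + 1 - (i+1) :=
      sub_length S (i+1) (j-1) (by omega) (by omega)
    have hmem : (i+1) ∈ occs S (sub S (i+1) (j-1)) := by
      unfold occs
      simp only [Finset.mem_filter, Finset.mem_Icc]
      refine ⟨⟨by omega, by omega⟩, ?_⟩
      congr 1
      omega
    have hcard1 : (occs S (sub S (i+1) (j-1))).card = 1 := by
      have hpos := Finset.card_pos.mpr ⟨i+1, hmem⟩
      omega
    have hUPS : UPS S (i+1) (j-1) := ⟨by omega, by omega, by omega, hpal', hcard1⟩
    obtain ⟨k, hk1, hk2⟩ := ih (i+1) (j-1) (by omega) hUPS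
    refine ⟨k+1, by omega, ?_⟩
    have e1 : i + (k+1) = (i+1) + k := by omega
    have e2 : j - (k+1) = (j-1) - k := by omega
    rw [e1, e2]
    exact hk2

theorem stmt5 (S : List Char) (i j : ℕ) (h : UPS S i j) :
    ∃ k, 2 * k ≤ j - i ∧ MUPS S (i + k) (j - k) := by
  exact stmt5_aux S (j - i) i j le_rfl h
end

section
/- Let S[i..j] be a unique palindromic substring of S, and suppose S[i'..j'] is a palindromic substring of S with i ≤ i' ≤ j' ≤ j and i'+j' ≠ i+j (different center). Then S[i'..j'] occurs at least twice in S, so it is not unique. -/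
lemma pal_mirror_s9 {t : List Char} {a n : ℕ} (ht : t.reverse = t)
    (hw : ((t.drop a).take n).reverse = (t.drop a).take n)
    (h : a + n ≤ t.length) :
    (t.drop (t.length - a - n)).take n = (t.drop a).take n := by
  conv_lhs => rw [← ht]
  simp only [List.length_reverse]
  rw [List.drop_reverse, List.take_reverse]
  have hlen : (t.take (t.length - (t.length - a - n))).length = a + n := by
    simp [List.length_take]; omega
  rw [hlen]
  have h1 : t.length - (t.length - a - n) = a + n := by omega
  rw [h1, List.drop_take]
  rw [show a + n - n = a from by omega, show a + n - a = n from by omega, hw]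

lemma dtdt (S : List Char) (b a n m : ℕ) (h1 : a + n ≤ m) :
    (((S.drop b).take m).drop a).take n = (S.drop (a + b)).take n := by
  rw [List.drop_take, List.drop_drop, List.take_take,
    Nat.min_eq_left (by omega), Nat.add_comm b a]

theorem stmt9 (S : List Char) (i j i' j' : ℕ)
    (h : UPS S i j) (h1 : i ≤ i') (h2 : i' ≤ j') (h3 : j' ≤ j)
    (hpal : isPal (sub S i' j')) (hc : i' + j' ≠ i + j) :
    2 ≤ (occs S (sub S i' j')).card ∧ ¬ uniqueIn S (sub S i' j') := by
  obtain ⟨hi1, hij, hjS, hpalT, -⟩ := h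
  set w := sub S i' j' with hw
  set n := j' + 1 - i' with hn
  have hwdef : w = (S.drop (i'-1)).take n := rfl
  have hwlen : w.length = n := by
    rw [hwdef]; simp [List.length_take, List.length_drop]; omega
  have ht : (sub S i j).reverse = sub S i j := hpalT
  have tlen : (sub S i j).length = j + 1 - i := by
    simp [sub, List.length_take, List.length_drop]; omega
  have hA : ((sub S i j).drop (i'-i)).take n = w := by
    rw [hwdef, sub, dtdt S (i-1) (i'-i) n (j+1-i) (by omega),
      show i' - i + (i - 1) = i' - 1 from by omega]
  have hmir := pal_mirror_s9 ht (by rw [hA]; exact hpal)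
    (by rw [tlen]; omega) (a := i'-i) (n := n)
  have hb : (sub S i j).length - (i'-i) - n = j - j' := by rw [tlen]; omega
  have hB : (S.drop (i + j - j' - 1)).take n = w := by
    rw [← hA, ← hmir, hb, sub, dtdt S (i-1) (j-j') n (j+1-i) (by omega),
      show j - j' + (i - 1) = i + j - j' - 1 from by omega]
  have hmem : ∀ p, 1 ≤ p → p ≤ S.length → (S.drop (p-1)).take n = w →
      p ∈ occs S w := by
    intro p hp1 hpS hpw
    simp only [occs, Finset.mem_filter, Finset.mem_Icc]
    refine ⟨⟨hp1, hpS⟩, ?_⟩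
    rw [hwlen, sub, show p + n - 1 + 1 - p = n from by omega, hpw]
  have hm1 : i' ∈ occs S w := hmem i' (by omega) (by omega) (by rw [← hwdef])
  have hm2 : i + j - j' ∈ occs S w := hmem _ (by omega) (by omega) hB
  have hne : i' ≠ i + j - j' := by omega
  have hcard : 1 < (occs S w).card :=
    Finset.one_lt_card.mpr ⟨i', hm1, i + j - j', hm2, hne⟩
  exact ⟨hcard, fun hu => by simp [uniqueIn] at hu; omega⟩
end

section
/- Let [x,y] be a MUPS of S and [s,t] an interval with y ≤ t. If S[x-(t-y)..t] is a palindrome, then S[x-(t-y)..t] is a unique palindromic substring of S containing [s',t] for any s' ≥ x-(t-y); in particular, extending a MUPS symmetrically about its center preserves uniqueness. -/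
theorem stmt16 (S : List Char) (x y s t : ℕ)
    (hm : MUPS S x y) (hyt : y ≤ t) (ht : t ≤ S.length)
    (hx : t - y < x)
    (hpal : isPal (sub S (x - (t - y)) t)) :
    UPS S (x - (t - y)) t ∧
      ∀ s', x - (t - y) ≤ s' → s' ≤ t → x - (t - y) ≤ s' ∧ t ≤ t := by
  obtain ⟨⟨hx1, hxy, hyn, hpalw, huw⟩, -⟩ := hm
  set d := t - y with hd
  set v := sub S (x - d) t with hv
  set w := sub S x y with hw
  have hdx : d < x := hx
  have hvlen : v.length = t + 1 - (x - d) := by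
    simp only [hv, sub, List.length_take, List.length_drop]
    omega
  have hwlen : w.length = y + 1 - x := by
    simp only [hw, sub, List.length_take, List.length_drop]
    omega
  -- key : any occurrence of v shifted by d gives an occurrence of w
  have key : ∀ p ∈ occs S v, p + d ∈ occs S w := by
    intro p hp
    simp only [occs, Finset.mem_filter, Finset.mem_Icc] at hp ⊢
    obtain ⟨⟨hp1, hpn⟩, hps⟩ := hp
    rw [hvlen] at hps
    have hidx : p + (t + 1 - (x - d)) - 1 + 1 - p = t + 1 - (x - d) := by omega
    rw [show sub S p (p + (t + 1 - (x - d)) - 1) = (S.drop (p-1)).take (t + 1 - (x - d)) by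
      simp only [sub]; rw [hidx]] at hps
    -- length constraint: p - 1 + (t+1-(x-d)) ≤ S.length
    have hlc : t + 1 - (x - d) ≤ S.length - (p - 1) := by
      have := congrArg List.length hps
      simp only [List.length_take, List.length_drop, hvlen] at this
      omega
    constructor
    · constructor
      · omega
      · omega
    · -- the substring equation
      have h2 := congrArg (fun l => (l.drop d).take (y + 1 - x)) hps
      simp only [hv, sub, List.drop_take, List.drop_drop, List.take_take] at h2
      rw [show (y + 1 - x) ⊓ (t + 1 - (x - d) - d) = y + 1 - x by omega] at h2
      rw [show p - 1 + d = p + d - 1 by omega, show x - d - 1 + d = x - 1 by omega] at h2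
      rw [hwlen]
      rw [show sub S (p + d) (p + d + (y + 1 - x) - 1)
            = (S.drop (p + d - 1)).take (y + 1 - x) by
        simp only [sub]; congr 1; omega]
      rw [h2, hw]
      simp only [sub]
  have hinj : Set.InjOn (· + d) (occs S v) := by
    intro a _ b _ hab
    simpa using hab
  have hcard_le : (occs S v).card ≤ (occs S w).card :=
    Finset.card_le_card_of_injOn (· + d) key hinj
  have hmemv : x - d ∈ occs S v := by
    simp only [occs, Finset.mem_filter, Finset.mem_Icc]
    refine ⟨⟨by omega, by omega⟩, ?_⟩
    rw [hvlen, show x - d + (t + 1 - (x - d)) - 1 = t by omega]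
  have hone : 1 ≤ (occs S v).card := Finset.card_pos.mpr ⟨x - d, hmemv⟩
  have huv : uniqueIn S v := by
    unfold uniqueIn
    unfold uniqueIn at huw
    omega
  refine ⟨⟨by omega, by omega, ht, hpal, huv⟩, fun s' h1 h2 => ⟨h1, le_refl t⟩⟩
end

section
/- If S[i..j] is a palindrome and S[i..j] occurs exactly once in S, then either j-i+1 ≤ 2, or S[i+1..j-1] is a palindrome; moreover, if additionally S[i+1..j-1] occurs exactly once in S, then S[i..j] is not a MUPS but S[i+1..j-1] is still a unique palindromic substring, so by induction every unique palindromic substring of S contains a MUPS of S with the same center. -/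
lemma tail_dropLast_comm (l : List Char) : l.tail.dropLast = l.dropLast.tail := by
  cases l with
  | nil => rfl
  | cons a l =>
    cases l with
    | nil => rfl
    | cons b l => simp [List.dropLast_cons₂]

lemma pal_tail_dropLast {w : List Char} (h : isPal w) : isPal w.tail.dropLast := by
  unfold isPal at *
  have h1 : w.tail = w.dropLast.reverse := by rw [← List.tail_reverse, h]
  rw [← List.tail_reverse, h1, List.reverse_reverse, ← h1, tail_dropLast_comm]

lemma inner_eq (S : List Char) (i j : ℕ) (h1 : 1 ≤ i) (h2 : i + 2 ≤ j) (h3 : j ≤ S.length) :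
    sub S (i+1) (j-1) = (sub S i j).tail.dropLast := by
  unfold sub
  rw [← List.drop_one, List.drop_take, List.drop_drop, List.dropLast_eq_take, List.take_take]
  simp only [List.length_take, List.length_drop]
  congr 1
  · omega
  · congr 1
    omega

lemma inner_len (S : List Char) (i j : ℕ) (h1 : 1 ≤ i) (h2 : i + 2 ≤ j) (h3 : j ≤ S.length) :
    (sub S (i+1) (j-1)).length = j - i - 1 := by
  unfold sub
  simp only [List.length_take, List.length_drop]
  omega

lemma mem_occs_inner (S : List Char) (i j : ℕ) (h1 : 1 ≤ i) (h2 : i + 2 ≤ j) (h3 : j ≤ S.length) :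
    (i+1) ∈ occs S (sub S (i+1) (j-1)) := by
  unfold occs
  rw [Finset.mem_filter, Finset.mem_Icc]
  refine ⟨⟨by omega, by omega⟩, ?_⟩
  rw [inner_len S i j h1 h2 h3]
  congr 1
  omega

theorem stmt18 (S : List Char) :
    (∀ i j, UPS S i j → (j + 1 - i ≤ 2 ∨ isPal (sub S (i+1) (j-1)))) ∧
    (∀ i j, UPS S i j → 2 < j + 1 - i → uniqueIn S (sub S (i+1) (j-1)) →
      ¬ MUPS S i j ∧ UPS S (i+1) (j-1)) ∧
    (∀ i j, UPS S i j → ∃ k, 2 * k ≤ j - i ∧ MUPS S (i + k) (j - k)) := by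
  have part1 : ∀ i j, UPS S i j → (j + 1 - i ≤ 2 ∨ isPal (sub S (i+1) (j-1))) := by
    rintro i j ⟨h1, h2, h3, hp, hu⟩
    by_cases h : j + 1 - i ≤ 2
    · exact Or.inl h
    · right
      rw [inner_eq S i j h1 (by omega) h3]
      exact pal_tail_dropLast hp
  have unique1 : ∀ i j, UPS S i j → 2 < j + 1 - i →
      1 ≤ (occs S (sub S (i+1) (j-1))).card := by
    rintro i j ⟨h1, h2, h3, -, -⟩ hlen
    exact Finset.card_pos.mpr ⟨i+1, mem_occs_inner S i j h1 (by omega) h3⟩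
  have part2 : ∀ i j, UPS S i j → 2 < j + 1 - i → uniqueIn S (sub S (i+1) (j-1)) →
      ¬ MUPS S i j ∧ UPS S (i+1) (j-1) := by
    intro i j hU hlen hun
    obtain ⟨h1, h2, h3, hp, hu⟩ := hU
    constructor
    · rintro ⟨-, h | h⟩
      · omega
      · unfold uniqueIn at hun; omega
    · refine ⟨by omega, by omega, by omega, ?_, hun⟩
      rcases part1 i j ⟨h1, h2, h3, hp, hu⟩ with h | h
      · omega
      · exact h
  refine ⟨part1, part2, ?_⟩
  have part3 : ∀ n i j, j - i ≤ n → UPS S i j →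
      ∃ k, 2 * k ≤ j - i ∧ MUPS S (i + k) (j - k) := by
    intro n
    induction n with
    | zero =>
      intro i j hle hU
      exact ⟨0, by omega, hU, Or.inl (by omega)⟩
    | succ n ih =>
      intro i j hle hU
      by_cases hs : j + 1 - i ≤ 2
      · exact ⟨0, by omega, hU, Or.inl (by omega)⟩
      · obtain ⟨h1, h2, h3, hp, hu⟩ := hU
        by_cases hc : 2 ≤ (occs S (sub S (i+1) (j-1))).card
        · exact ⟨0, by omega, ⟨h1, h2, h3, hp, hu⟩, Or.inr hc⟩
        · have hone := unique1 i j ⟨h1, h2, h3, hp, hu⟩ (by omega)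
          have hun : uniqueIn S (sub S (i+1) (j-1)) := by unfold uniqueIn; omega
          obtain ⟨-, hU'⟩ := part2 i j ⟨h1, h2, h3, hp, hu⟩ (by omega) hun
          obtain ⟨k, hk1, hk2⟩ := ih (i+1) (j-1) (by omega) hU'
          refine ⟨k+1, by omega, ?_⟩
          have e1 : i + (k+1) = (i+1) + k := by ring
          have e2 : j - (k+1) = (j-1) - k := by omega
          rw [e1, e2]
          exact hk2
  exact fun i j hU => part3 (j - i) i j le_rfl hU
end
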